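/- Let $w_i, b_i > 0$ with $\sum_{i=1}^M b_i < 1$, and $\epsilon = t_s/\mathbb{E}[T] \geq 0$. For any $r_1,\ldots,r_M > 0$ satisfying $r_l \leq b_l(\sum_{i=1}^M r_i + 1)$ for all $l$, we have $\sum_{l=1}^M \frac{w_l e^{-r_l \epsilon}}{r_l} e^{(\sum_i r_i)\epsilon}(1 + \sum_i r_i) + \sum_l w_l \geq \sum_{l=1}^M \frac{w_l}{b_l} e^{-\epsilon \sum_i b_i / (1 - \sum_i b_i)} + \sum_l w_l$. -/

import Mathlib

theorem stmt_12 (M : ℕ) (w b : Fin M → ℝ)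
    (hw : ∀ i, 0 < w i) (hb : ∀ i, 0 < b i) (hsum : ∑ i, b i < 1)
    (ε : ℝ) (hε : 0 ≤ ε) (r : Fin M → ℝ) (hr : ∀ i, 0 < r i)
    (hcon : ∀ l, r l ≤ b l * ((∑ i, r i) + 1)) :
    (∑ l, w l / b l * Real.exp (-(ε * (∑ i, b i) / (1 - ∑ i, b i)))) + ∑ l, w l ≤
      (∑ l, w l * Real.exp (-(r l * ε)) / r l *
        Real.exp ((∑ i, r i) * ε) * (1 + ∑ i, r i)) + ∑ l, w l := by
  apply add_le_add_left
  apply Finset.sum_le_sum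
  intro l _
  have hB0 : 0 ≤ ∑ i, b i := Finset.sum_nonneg fun i _ => (hb i).le
  have hS0 : 0 < ∑ i, r i := Finset.sum_pos (fun i _ => hr i) ⟨l, Finset.mem_univ l⟩
  have hrl : r l ≤ ∑ i, r i := Finset.single_le_sum (fun i _ => (hr i).le) (Finset.mem_univ l)
  have h1 : Real.exp (-(ε * (∑ i, b i) / (1 - ∑ i, b i))) ≤ 1 := by
    rw [Real.exp_le_one_iff]
    have h1B : (0:ℝ) < 1 - ∑ i, b i := by linarith
    have : 0 ≤ ε * (∑ i, b i) / (1 - ∑ i, b i) := div_nonneg (mul_nonneg hε hB0) h1B.le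
    linarith
  have hexp : 1 ≤ Real.exp (-(r l * ε)) * Real.exp ((∑ i, r i) * ε) := by
    rw [← Real.exp_add]
    apply Real.one_le_exp
    nlinarith
  calc w l / b l * Real.exp (-(ε * (∑ i, b i) / (1 - ∑ i, b i)))
      ≤ w l / b l * 1 := by
        apply mul_le_mul_of_nonneg_left h1 (div_nonneg (hw l).le (hb l).le)
    _ = w l / b l := mul_one _
    _ ≤ w l * (1 + ∑ i, r i) / r l := by
        rw [div_le_div_iff₀ (hb l) (hr l)]
        nlinarith [hcon l, (hw l).le]
    _ ≤ w l * Real.exp (-(r l * ε)) / r l * Real.exp ((∑ i, r i) * ε) * (1 + ∑ i, r i) := by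
        have h2 : w l * (1 + ∑ i, r i) / r l ≤
            (w l * (1 + ∑ i, r i) / r l) * (Real.exp (-(r l * ε)) * Real.exp ((∑ i, r i) * ε)) := by
          nth_rewrite 1 [← mul_one (w l * (1 + ∑ i, r i) / r l)]
          apply mul_le_mul_of_nonneg_left hexp (div_nonneg (mul_nonneg (hw l).le (by linarith)) (hr l).le)
        calc w l * (1 + ∑ i, r i) / r l ≤ _ := h2
          _ = w l * Real.exp (-(r l * ε)) / r l * Real.exp ((∑ i, r i) * ε) * (1 + ∑ i, r i) := by
            ring
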